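/- Let 0 → A → B → C → 0 be a short exact sequence of R-modules with A ≠ 0, with A and B of finite quasi-Gorenstein projective dimension, and with C quasi-Gorenstein projective. Then the quasi-Gorenstein projective dimensions of A and B are equal. -/

import Mathlib

open CategoryTheory

universe u
variable {R : Type u} [Ring R]

/-- A module `Q` is quasi-projective if every homomorphism from `Q` to a quotient
of `Q` lifts to an endomorphism of `Q`. -/
def QuasiProjective (Q : ModuleCat.{u} R) : Prop :=
  ∀ (B : ModuleCat.{u} R) (g : Q ⟶ B), Function.Surjective g →
    ∀ f : Q ⟶ B, ∃ h : Q ⟶ Q, h ≫ g = f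

/-- `M` is quasi-Gorenstein projective if it is a syzygy of an exact complex of
projective modules (given by short exact sequences `0 → K (n+1) → P n → K n → 0`)
that remains exact under `Hom(-, Q)` for every quasi-projective module `Q`. -/
def QuasiGorensteinProjective (M : ModuleCat.{u} R) : Prop :=
  ∃ (K P : ℤ → ModuleCat.{u} R) (ι : ∀ n, K (n + 1) ⟶ P n) (π : ∀ n, P n ⟶ K n),
    (∀ n, Module.Projective R (P n)) ∧
    (∀ n, Function.Injective (ι n)) ∧
    (∀ n, Function.Surjective (π n)) ∧
    (∀ n, Function.Exact (ι n) (π n)) ∧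
    (∀ n (Q : ModuleCat.{u} R), QuasiProjective Q →
      ∀ f : K (n + 1) ⟶ Q, ∃ g : P n ⟶ Q, ι n ≫ g = f) ∧
    Nonempty (M ≅ K 0)

/-- `qgpdimLE n M` means the quasi-Gorenstein projective dimension of `M`
is at most `n`: there is a resolution of `M` of length `n` by
quasi-Gorenstein projective modules. -/
def qgpdimLE : ℕ → ModuleCat.{u} R → Prop
  | 0, M => QuasiGorensteinProjective M
  | n + 1, M => ∃ (K G : ModuleCat.{u} R) (f : K ⟶ G) (g : G ⟶ M),
      QuasiGorensteinProjective G ∧ Function.Injective f ∧ Function.Surjective g ∧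
      Function.Exact f g ∧ qgpdimLE n K

/-- The quasi-Gorenstein projective dimension of `M`, as an element of `ℕ∞`
(`⊤` if no finite resolution exists). -/
noncomputable def qgpdim (M : ModuleCat.{u} R) : ℕ∞ :=
  sInf ((fun m : ℕ => (m : ℕ∞)) '' {m : ℕ | qgpdimLE m M})

namespace QGPAux
variable {R : Type u} [Ring R]

@[simp] lemma mcomp_apply {A B C : ModuleCat.{u} R} (f : A ⟶ B) (g : B ⟶ C) (x : A) :
    (f ≫ g) x = g (f x) := rfl

@[simp] lemma mid_apply {A : ModuleCat.{u} R} (x : A) : (𝟙 A : A ⟶ A) x = x := rfl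

lemma hom_congr_fun {A B : ModuleCat.{u} R} {f g : A ⟶ B} (h : f = g) (x : A) : f x = g x := by
  rw [h]

lemma punit_projective : Module.Projective R PUnit.{u+1} := by
  rw [Module.projective_def]
  exact ⟨0, fun x => Subsingleton.elim _ _⟩

/-- the zero module -/
abbrev Z0 : ModuleCat.{u} R := ModuleCat.of R PUnit

lemma iso_hom_bij {A B : ModuleCat.{u} R} (e : A ≅ B) : Function.Bijective e.hom :=
  e.toLinearEquiv.bijective

lemma iso_inv_hom_apply {A B : ModuleCat.{u} R} (e : A ≅ B) (x : A) : e.inv (e.hom x) = x :=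
  e.toLinearEquiv.symm_apply_apply x

lemma iso_hom_inv_apply {A B : ModuleCat.{u} R} (e : A ≅ B) (y : B) : e.hom (e.inv y) = y :=
  e.toLinearEquiv.apply_symm_apply y

/-- factor a morphism through a surjection whose kernel it kills -/
lemma exists_factor {A B Q : ModuleCat.{u} R} (q : A ⟶ B) (hq : Function.Surjective q)
    (t : A ⟶ Q) (h : ∀ a, q a = 0 → t a = 0) : ∃ r : B ⟶ Q, q ≫ r = t := by
  choose s hs using hq
  have key : ∀ a b, q a = b → t a = t (s b) := by
    intro a b hab
    have h0 : q (a - s b) = 0 := by rw [map_sub, hab, hs]; simp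
    have := h _ h0
    rw [map_sub, sub_eq_zero] at this
    exact this
  refine ⟨ModuleCat.ofHom ({ toFun := fun b => t (s b), map_add' := ?_, map_smul' := ?_ } : B →ₗ[R] Q), ?_⟩
  · intro b₁ b₂
    have : q (s b₁ + s b₂) = b₁ + b₂ := by rw [map_add, hs, hs]
    exact (key _ _ this).symm.trans (map_add t.hom _ _)
  · intro r b
    have : q (r • s b) = r • b := by rw [map_smul, hs]
    exact (key _ _ this).symm.trans (map_smul t.hom _ _)
  · apply ModuleCat.hom_ext; apply LinearMap.ext; intro a
    exact (key a (q a) rfl).symm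

lemma quasiProjective_of_projective {Q : ModuleCat.{u} R} (h : Module.Projective R Q) :
    QuasiProjective Q := by
  intro B g hg f
  haveI := h
  obtain ⟨l, hl⟩ := Module.projective_lifting_property g.hom f.hom hg
  exact ⟨ModuleCat.ofHom l, ModuleCat.hom_ext hl⟩

/-- partial inverse of an injective morphism, defined on its range -/
noncomputable def preim {X Y : ModuleCat.{u} R} (i : X ⟶ Y) (hi : Function.Injective i) :
    ↥(LinearMap.range i.hom) →ₗ[R] X :=
  ((LinearEquiv.ofInjective i.hom hi).symm : _ →ₗ[R] X)

lemma preim_spec {X Y : ModuleCat.{u} R} (i : X ⟶ Y) (hi : Function.Injective i)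
    (w : ↥(LinearMap.range i.hom)) : i (preim i hi w) = ↑w := by
  have := (LinearEquiv.ofInjective i.hom hi).apply_symm_apply w
  calc i (preim i hi w) = ↑((LinearEquiv.ofInjective i.hom hi)
      ((LinearEquiv.ofInjective i.hom hi).symm w)) := rfl
  _ = ↑w := by rw [this]

lemma preim_apply {X Y : ModuleCat.{u} R} (i : X ⟶ Y) (hi : Function.Injective i)
    (x : X) (hmem : i x ∈ LinearMap.range i.hom) : preim i hi ⟨i x, hmem⟩ = x := by
  apply hi
  rw [preim_spec]

end QGPAux
namespace QGPAux
variable {R : Type u} [Ring R]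

/-- One short exact sequence `0 → X → P → Y → 0` with `P` projective and the lifting
property for maps out of `X` into quasi-projective modules. -/
structure ResStep (X Y : ModuleCat.{u} R) : Type (u+1) where
  P : ModuleCat.{u} R
  i : X ⟶ P
  p : P ⟶ Y
  proj : Module.Projective R P
  inj : Function.Injective i
  surj : Function.Surjective p
  ex : Function.Exact i p
  lift : ∀ (Q : ModuleCat.{u} R), QuasiProjective Q → ∀ f : X ⟶ Q, ∃ g : P ⟶ Q, i ≫ g = f

def ResStep.castL {X X' Y : ModuleCat.{u} R} (h : X = X') (s : ResStep X Y) : ResStep X' Y :=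
  h ▸ s

def ResStep.castR {X Y Y' : ModuleCat.{u} R} (h : Y = Y') (s : ResStep X Y) : ResStep X Y' :=
  h ▸ s

noncomputable def ResStep.isoL {X X' Y : ModuleCat.{u} R} (e : X ≅ X') (s : ResStep X Y) :
    ResStep X' Y where
  P := s.P
  i := e.inv ≫ s.i
  p := s.p
  proj := s.proj
  inj := s.inj.comp (iso_hom_bij e.symm).injective
  surj := s.surj
  ex := by
    intro y
    refine (s.ex y).trans ⟨fun ⟨x, hx⟩ => ⟨e.hom x, ?_⟩, fun ⟨x, hx⟩ => ⟨e.inv x, hx⟩⟩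
    show s.i (e.inv (e.hom x)) = y
    rw [iso_inv_hom_apply]; exact hx
  lift := by
    intro Q hQ f
    obtain ⟨g, hg⟩ := s.lift Q hQ (e.hom ≫ f)
    refine ⟨g, ?_⟩
    apply ModuleCat.hom_ext; apply LinearMap.ext; intro x
    have h1 := hom_congr_fun hg (e.inv x)
    exact h1.trans (congrArg (fun y => f y) (iso_hom_inv_apply e x))

noncomputable def ResStep.isoR {X Y Y' : ModuleCat.{u} R} (e : Y ≅ Y') (s : ResStep X Y) :
    ResStep X Y' where
  P := s.P
  i := s.i
  p := s.p ≫ e.hom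
  proj := s.proj
  inj := s.inj
  surj := (iso_hom_bij e).surjective.comp s.surj
  ex := by
    intro y
    show e.hom (s.p y) = 0 ↔ _
    rw [show (0 : Y') = e.hom 0 by simp, (iso_hom_bij e).injective.eq_iff]
    exact s.ex y
  lift := s.lift

/-- a chain of `ResStep`s going to the left (projective resolution direction) -/
def FwdChain (M : ModuleCat.{u} R) : Type (u+1) :=
  Σ' K : ℕ → ModuleCat.{u} R, (K 0 = M) ×' (∀ n, ResStep (K (n+1)) (K n))

/-- a chain of `ResStep`s going to the right (cosyzygy direction) -/
def BwdChain (M : ModuleCat.{u} R) : Type (u+1) :=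
  Σ' K : ℕ → ModuleCat.{u} R, (K 0 = M) ×' (∀ n, ResStep (K n) (K (n+1)))

lemma qgp_of_chains {M : ModuleCat.{u} R} (F : FwdChain M) (B : BwdChain M) :
    QuasiGorensteinProjective M := by
  obtain ⟨KF, hF0, sF⟩ := F
  obtain ⟨KB, hB0, sB⟩ := B
  let K : ℤ → ModuleCat.{u} R := fun n => match n with
    | .ofNat k => KF k
    | .negSucc k => KB (k+1)
  have step : ∀ n : ℤ, ResStep (K (n+1)) (K n) := by
    intro n
    match n with
    | .ofNat k =>
      exact (sF k).castL (show KF (k+1) = K (Int.ofNat k + 1) from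
        (congrArg K (show (Int.ofNat k) + 1 = Int.ofNat (k+1) from rfl)).symm)
    | .negSucc 0 =>
      exact (sB 0).castL (show KB 0 = K (Int.negSucc 0 + 1) by
        rw [hB0, ← hF0]
        exact (congrArg K (show Int.negSucc 0 + 1 = Int.ofNat 0 from rfl)).symm)
    | .negSucc (k+1) =>
      exact (sB (k+1)).castL (show KB (k+1) = K (Int.negSucc (k+1) + 1) from
        (congrArg K (show Int.negSucc (k+1) + 1 = Int.negSucc k from rfl)).symm)
  exact ⟨K, fun n => (step n).P, fun n => (step n).i, fun n => (step n).p,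
    fun n => (step n).proj, fun n => (step n).inj, fun n => (step n).surj,
    fun n => (step n).ex, fun n => (step n).lift, ⟨eqToIso hF0.symm⟩⟩

end QGPAux
namespace QGPAux
variable {R : Type u} [Ring R]

lemma qgp_iso {M N : ModuleCat.{u} R} (e : M ≅ N) (h : QuasiGorensteinProjective N) :
    QuasiGorensteinProjective M := by
  obtain ⟨K, P, ι, π, h1, h2, h3, h4, h5, ⟨e'⟩⟩ := h
  exact ⟨K, P, ι, π, h1, h2, h3, h4, h5, ⟨e ≪≫ e'⟩⟩

lemma qgp_of_unpacked (K : ℤ → ModuleCat.{u} R)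
    (step : ∀ n : ℤ, ResStep (K (n+1)) (K n)) (j : ℤ) :
    QuasiGorensteinProjective (K j) := by
  refine qgp_of_chains ⟨fun n => match n with | 0 => K j | (k+1) => K (j+(k:ℤ)+1), rfl, ?_⟩
    ⟨fun n => match n with | 0 => K j | (k+1) => K (j-(k:ℤ)-1), rfl, ?_⟩
  · intro n
    match n with
    | 0 => exact (step j).castL (congrArg K (show j+1 = j+((0:ℕ):ℤ)+1 by omega))
    | (k+1) =>
      exact (step (j+(k:ℤ)+1)).castL
        (congrArg K (show j+(k:ℤ)+1+1 = j+((k+1:ℕ):ℤ)+1 by omega))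
  · intro n
    match n with
    | 0 =>
      have t1 := (step (j-1)).castL (congrArg K (show j-1+1 = j by omega))
      exact t1.castR (congrArg K (show j-1 = j-((0:ℕ):ℤ)-1 by omega))
    | (k+1) =>
      have t1 := (step (j-(k:ℤ)-2)).castL (congrArg K (show j-(k:ℤ)-2+1 = j-(k:ℤ)-1 by omega))
      exact t1.castR (congrArg K (show j-(k:ℤ)-2 = j-((k+1:ℕ):ℤ)-1 by omega))

lemma chains_of_qgp {M : ModuleCat.{u} R} (h : QuasiGorensteinProjective M) :
    Nonempty (FwdChain M) ∧ Nonempty (BwdChain M) := by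
  obtain ⟨K, P, ι, π, h1, h2, h3, h4, h5, ⟨e⟩⟩ := h
  have step : ∀ n : ℤ, ResStep (K (n+1)) (K n) :=
    fun n => ⟨P n, ι n, π n, h1 n, h2 n, h3 n, h4 n, h5 n⟩
  constructor
  · refine ⟨⟨fun n => match n with | 0 => M | (k+1) => K ((k:ℤ)+1), rfl, ?_⟩⟩
    intro n
    match n with
    | 0 =>
      have t1 := (step 0).castL (congrArg K (show (0:ℤ)+1 = ((0:ℕ):ℤ)+1 by omega))
      exact t1.isoR e.symm
    | (k+1) =>
      exact (step ((k:ℤ)+1)).castL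
        (congrArg K (show (k:ℤ)+1+1 = ((k+1:ℕ):ℤ)+1 by omega))
  · refine ⟨⟨fun n => match n with | 0 => M | (k+1) => K (-(k:ℤ)-1), rfl, ?_⟩⟩
    intro n
    match n with
    | 0 =>
      have t1 := (step (-1)).castL (congrArg K (show (-1:ℤ)+1 = 0 by omega))
      have t2 := t1.isoL e.symm
      exact t2.castR (congrArg K (show (-1:ℤ) = -((0:ℕ):ℤ)-1 by omega))
    | (k+1) =>
      have t1 := (step (-(k:ℤ)-2)).castL (congrArg K (show -(k:ℤ)-2+1 = -(k:ℤ)-1 by omega))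
      exact t1.castR (congrArg K (show -(k:ℤ)-2 = -((k+1:ℕ):ℤ)-1 by omega))

lemma exists_step_qgp {Z : ModuleCat.{u} R} (h : QuasiGorensteinProjective Z) :
    ∃ Z₁ : ModuleCat.{u} R, QuasiGorensteinProjective Z₁ ∧ Nonempty (ResStep Z₁ Z) := by
  obtain ⟨K, P, ι, π, h1, h2, h3, h4, h5, ⟨e⟩⟩ := h
  have step : ∀ n : ℤ, ResStep (K (n+1)) (K n) :=
    fun n => ⟨P n, ι n, π n, h1 n, h2 n, h3 n, h4 n, h5 n⟩
  have t1 := (step 0).castL (congrArg K (show (0:ℤ)+1 = 1 by omega))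
  exact ⟨K 1, qgp_of_unpacked K step 1, ⟨t1.isoR e.symm⟩⟩

lemma zero_mor_from_subsingleton {A B : ModuleCat.{u} R} [Subsingleton A] (f g : A ⟶ B) :
    f = g := by
  apply ModuleCat.hom_ext; apply LinearMap.ext; intro x
  rw [Subsingleton.elim x 0, map_zero, map_zero]

lemma qgp_of_projective {M : ModuleCat.{u} R} (h : Module.Projective R M) :
    QuasiGorensteinProjective M := by
  have hZ0 : Module.Projective R (Z0 (R := R)) := punit_projective
  have sZZ : ResStep (Z0 (R := R)) (Z0 (R := R)) := by
    refine ⟨Z0, 0, 0, hZ0, fun a b _ => Subsingleton.elim a b, fun y => ⟨0, Subsingleton.elim _ _⟩,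
      fun y => ⟨fun _ => ⟨0, Subsingleton.elim _ _⟩, fun _ => Subsingleton.elim _ _⟩, ?_⟩
    intro Q _ f
    exact ⟨0, zero_mor_from_subsingleton _ _⟩
  have s0M : ResStep (Z0 (R := R)) M := by
    refine ⟨M, 0, 𝟙 M, h, fun a b _ => Subsingleton.elim a b, fun y => ⟨y, rfl⟩, ?_, ?_⟩
    · intro y
      simp only [mid_apply]
      constructor
      · intro hy; exact ⟨0, by rw [hy]; exact map_zero _⟩
      · rintro ⟨x, hx⟩; rw [← hx, Subsingleton.elim x 0]; exact map_zero _
    · intro Q _ f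
      exact ⟨0, zero_mor_from_subsingleton _ _⟩
  have sM0 : ResStep M (Z0 (R := R)) := by
    refine ⟨M, 𝟙 M, 0, h, fun a b hab => hab, fun y => ⟨0, Subsingleton.elim _ _⟩,
      fun y => ⟨fun _ => ⟨y, rfl⟩, fun _ => Subsingleton.elim _ _⟩, ?_⟩
    intro Q _ f
    exact ⟨f, Category.id_comp f⟩
  refine qgp_of_chains ⟨fun n => match n with | 0 => M | _+1 => Z0, rfl, ?_⟩
    ⟨fun n => match n with | 0 => M | _+1 => Z0, rfl, ?_⟩
  · intro n
    match n with
    | 0 => exact s0M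
    | (k+1) => exact sZZ
  · intro n
    match n with
    | 0 => exact sM0
    | (k+1) => exact sZZ

end QGPAux
namespace QGPAux
variable {R : Type u} [Ring R]

/-- If `0 → X → Y → Z → 0` is exact and `Z` admits a `ResStep` onto it, then any map from `X`
to a quasi-projective module extends to `Y`. -/
lemma ext_lift {X Y Z Q : ModuleCat.{u} R} (i : X ⟶ Y) (v : Y ⟶ Z)
    (hi : Function.Injective i) (hv : Function.Surjective v) (hex : Function.Exact i v)
    {N₁ : ModuleCat.{u} R} (st : ResStep N₁ Z) (hQ : QuasiProjective Q) (f : X ⟶ Q) :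
    ∃ F : Y ⟶ Q, i ≫ F = f := by
  haveI := st.proj
  obtain ⟨h, hh⟩ := Module.projective_lifting_property v.hom st.p.hom hv
  have vh : ∀ p : st.P, v (h p) = st.p p := fun p => LinearMap.congr_fun hh p
  have hmem : ∀ z : N₁, h (st.i z) ∈ LinearMap.range i.hom := by
    intro z
    have hv0 : v (h (st.i z)) = 0 := by
      have h1 : v (h (st.i z)) = st.p (st.i z) := vh _
      rw [h1]
      exact (st.ex (st.i z)).mpr ⟨z, rfl⟩
    obtain ⟨x, hx⟩ := (hex _).mp hv0
    exact ⟨x, hx⟩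
  let k : N₁ ⟶ X := ModuleCat.ofHom ((preim i hi) ∘ₗ (LinearMap.codRestrict (LinearMap.range i.hom)
    ((h : st.P →ₗ[R] Y) ∘ₗ st.i.hom) hmem))
  have hk : ∀ z : N₁, i (k z) = h (st.i z) := by
    intro z
    show i (preim i hi ⟨h (st.i z), hmem z⟩) = h (st.i z)
    rw [preim_spec]
  obtain ⟨G, hG⟩ := st.lift Q hQ (k ≫ f)
  let PP : ModuleCat.{u} R := ModuleCat.of R (X × st.P)
  let s : PP ⟶ Y := ModuleCat.ofHom (LinearMap.coprod i.hom (h : st.P →ₗ[R] Y))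
  have hs : Function.Surjective s := by
    intro y
    obtain ⟨p, hp⟩ := st.surj (v y)
    have hv0 : v (y - h p) = 0 := by
      rw [map_sub, vh p, hp, sub_self]
    obtain ⟨x, hx⟩ := (hex _).mp hv0
    refine ⟨(x, p), ?_⟩
    show i x + h p = y
    rw [hx]; abel
  let t : PP ⟶ Q := ModuleCat.ofHom (LinearMap.coprod f.hom G.hom)
  have hker : ∀ a : PP, s a = 0 → t a = 0 := by
    rintro ⟨x, p⟩ hsa
    have hsa' : i x + h p = 0 := hsa
    have hp0 : st.p p = 0 := by
      have h1 : v (i x) = 0 := (hex _).mpr ⟨x, rfl⟩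
      have h2 : v (i x + h p) = 0 := by rw [hsa', map_zero]
      rw [map_add, h1, zero_add, vh p] at h2
      exact h2
    obtain ⟨z, hz⟩ := (st.ex p).mp hp0
    have hxz : x + k z = 0 := by
      apply hi
      rw [map_add, map_zero, hk, hz, hsa']
    have hx : x = - k z := eq_neg_of_add_eq_zero_left hxz
    show f x + G p = 0
    have hGz : G (st.i z) = f (k z) := hom_congr_fun hG z
    rw [hx, ← hz, hGz, map_neg]
    abel
  obtain ⟨F, hF⟩ := exists_factor s hs t hker
  refine ⟨F, ?_⟩
  apply ModuleCat.hom_ext; apply LinearMap.ext; intro x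
  have h1 := hom_congr_fun hF (x, (0 : st.P))
  have h2 : s (x, (0 : st.P)) = i x := by
    show i x + h 0 = i x
    rw [map_zero, add_zero]
  have h3 : t (x, (0 : st.P)) = f x := by
    show f x + G 0 = f x
    rw [map_zero, add_zero]
  show F (i x) = f x
  rw [← h2, ← h3]
  exact h1

end QGPAux
namespace QGPAux
variable {R : Type u} [Ring R]

def toLin {A B : ModuleCat.{u} R} (f : A ⟶ B) : A →ₗ[R] B := f.hom

lemma fwdChain_of_ses {X Y Z : ModuleCat.{u} R} (i : X ⟶ Y) (v : Y ⟶ Z)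
    (hi : Function.Injective i) (hv : Function.Surjective v) (hex : Function.Exact i v)
    (FX : FwdChain X) (FZ : FwdChain Z) : Nonempty (FwdChain Y) := by
  obtain ⟨KX, hX0, sX⟩ := FX
  obtain ⟨KZ, hZ0, sZ⟩ := FZ
  subst hX0
  subst hZ0
  let St : ℕ → Type (u+1) := fun n => Σ' (W : ModuleCat.{u} R) (a : KX n ⟶ W) (b : W ⟶ KZ n),
      Function.Injective a ∧ Function.Surjective b ∧ Function.Exact a b
  have step : ∀ n, (st : St n) → Σ' (st' : St (n+1)), ResStep st'.1 st.1 := by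
    intro n st
    obtain ⟨W, a, b, hainj, hbsurj, hab⟩ := st
    haveI := (sX n).proj
    haveI := (sZ n).proj
    let h := (Module.projective_lifting_property (toLin b) (toLin (sZ n).p) hbsurj).choose
    have hh := (Module.projective_lifting_property (toLin b) (toLin (sZ n).p) hbsurj).choose_spec
    have bh : ∀ p, b (h p) = (sZ n).p p := fun p => LinearMap.congr_fun hh p
    have ba0 : ∀ x, b (a x) = 0 := fun x => (hab (a x)).mpr ⟨x, rfl⟩
    have pXiX : ∀ x, (sX n).p ((sX n).i x) = 0 := fun x => ((sX n).ex _).mpr ⟨x, rfl⟩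
    have pZiZ : ∀ x, (sZ n).p ((sZ n).i x) = 0 := fun x => ((sZ n).ex _).mpr ⟨x, rfl⟩
    let PP : ModuleCat.{u} R := ModuleCat.of R ((sX n).P × (sZ n).P)
    let s : PP ⟶ W := ModuleCat.ofHom (LinearMap.coprod (toLin ((sX n).p ≫ a)) h)
    have sapp : ∀ (p : (sX n).P) (q : (sZ n).P), s (p, q) = a ((sX n).p p) + h q :=
      fun _ _ => rfl
    have hs : Function.Surjective s := by
      intro w
      obtain ⟨q, hq⟩ := (sZ n).surj (b w)
      have h0 : b (w - h q) = 0 := by rw [map_sub, bh, hq, sub_self]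
      obtain ⟨x, hx⟩ := (hab _).mp h0
      obtain ⟨p, hp⟩ := (sX n).surj x
      refine ⟨(p, q), ?_⟩
      rw [sapp, hp, hx]
      abel
    let W' : ModuleCat.{u} R := ModuleCat.of R ↥(LinearMap.ker s.hom)
    have memKer : ∀ x : KX (n+1), ((sX n).i x, (0 : (sZ n).P)) ∈ LinearMap.ker s.hom := by
      intro x
      have hk : s ((sX n).i x, 0) = 0 := by
        rw [sapp, pXiX, map_zero, map_zero, add_zero]
      exact hk
    let a' : KX (n+1) ⟶ W' := ModuleCat.ofHom (LinearMap.codRestrict (LinearMap.ker s.hom)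
      (LinearMap.prod (toLin (sX n).i) 0) memKer)
    have a'app : ∀ x : KX (n+1), (a' x).1 = ((sX n).i x, (0 : (sZ n).P)) := fun _ => rfl
    have memRan : ∀ w : ↥(LinearMap.ker s.hom), (w.1).2 ∈ LinearMap.range (sZ n).i.hom := by
      rintro ⟨⟨p, q⟩, hw⟩
      have hw' : a ((sX n).p p) + h q = 0 := hw
      have h1 : b (a ((sX n).p p) + h q) = 0 := by rw [hw', map_zero]
      rw [map_add, ba0, zero_add, bh] at h1
      obtain ⟨z, hz⟩ := ((sZ n).ex q).mp h1
      exact ⟨z, hz⟩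
    let b' : W' ⟶ KZ (n+1) := ModuleCat.ofHom ((preim (sZ n).i (sZ n).inj) ∘ₗ
      (LinearMap.codRestrict (LinearMap.range (sZ n).i.hom)
        ((LinearMap.snd R (sX n).P (sZ n).P) ∘ₗ (LinearMap.ker s.hom).subtype) memRan))
    have b'spec : ∀ w : ↥(LinearMap.ker s.hom), (sZ n).i (b' w) = (w.1).2 := by
      intro w
      show (sZ n).i (preim (sZ n).i (sZ n).inj ⟨(w.1).2, memRan w⟩) = (w.1).2
      rw [preim_spec]
    have ha'inj : Function.Injective a' := by
      intro x y hxy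
      have h1 : ((a' x).1).1 = ((a' y).1).1 := by rw [hxy]
      exact (sX n).inj h1
    have hb'surj : Function.Surjective b' := by
      intro z
      have h1 : b (h ((sZ n).i z)) = 0 := by rw [bh, pZiZ]
      obtain ⟨x, hx⟩ := (hab _).mp h1
      obtain ⟨p, hp⟩ := (sX n).surj x
      have hmem : ((-p : (sX n).P), (sZ n).i z) ∈ LinearMap.ker s.hom := by
        have hs0 : s (-p, (sZ n).i z) = 0 := by
          rw [sapp, map_neg, map_neg, hp, hx]
          abel
        exact hs0
      refine ⟨⟨(-p, (sZ n).i z), hmem⟩, ?_⟩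
      apply (sZ n).inj
      rw [b'spec]
    have hab' : Function.Exact a' b' := by
      intro w
      constructor
      · intro hw0
        have hq : (w.1).2 = 0 := by
          rw [← b'spec w, hw0, map_zero]
        have hw2 : a ((sX n).p (w.1).1) + h (w.1).2 = 0 := w.2
        rw [hq, map_zero, add_zero] at hw2
        have hp0 : (sX n).p (w.1).1 = 0 := by
          apply hainj
          rw [hw2, map_zero]
        obtain ⟨x, hx⟩ := ((sX n).ex _).mp hp0
        refine ⟨x, ?_⟩
        apply Subtype.ext
        rw [a'app]
        apply Prod.ext
        · exact hx
        · exact hq.symm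
      · rintro ⟨x, rfl⟩
        apply (sZ n).inj
        rw [b'spec, map_zero, a'app]
    haveI hPP : Module.Projective R ((sX n).P × (sZ n).P) := inferInstance
    have RS : ResStep W' W := by
      refine ⟨PP, ModuleCat.ofHom (LinearMap.ker s.hom).subtype, s, hPP, Subtype.val_injective, hs, ?_, ?_⟩
      · intro p
        constructor
        · intro hp; exact ⟨⟨p, hp⟩, rfl⟩
        · rintro ⟨w, rfl⟩; exact w.2
      · intro Q hQ f
        obtain ⟨gA, hgA⟩ := (sX n).lift Q hQ (a' ≫ f)
        have gAiX : ∀ x, gA ((sX n).i x) = f (a' x) := fun x => hom_congr_fun hgA x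
        let fL : ↥(LinearMap.ker s.hom) →ₗ[R] Q := toLin f
        let f2 : ↥(LinearMap.ker s.hom) →ₗ[R] Q := fL - ((toLin gA) ∘ₗ
          ((LinearMap.fst R (sX n).P (sZ n).P) ∘ₗ (LinearMap.ker s.hom).subtype))
        let f2' : W' ⟶ Q := ModuleCat.ofHom f2
        have f2app : ∀ w : ↥(LinearMap.ker s.hom), f2' w = f w - gA ((w.1).1) := fun _ => rfl
        have hker2 : ∀ w, b' w = 0 → f2' w = 0 := by
          intro w hw0
          obtain ⟨x, rfl⟩ := (hab' w).mp hw0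
          rw [f2app, a'app, gAiX, sub_self]
        obtain ⟨h', hh'⟩ := exists_factor b' hb'surj f2' hker2
        have h'b' : ∀ w, h' (b' w) = f2' w := fun w => hom_congr_fun hh' w
        obtain ⟨gZ, hgZ⟩ := (sZ n).lift Q hQ h'
        have gZiZ : ∀ z, gZ ((sZ n).i z) = h' z := fun z => hom_congr_fun hgZ z
        refine ⟨ModuleCat.ofHom (LinearMap.coprod (toLin gA) (toLin gZ)), ?_⟩
        apply ModuleCat.hom_ext; apply LinearMap.ext; intro w
        show gA ((w.1).1) + gZ ((w.1).2) = f w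
        rw [← b'spec w, gZiZ, h'b', f2app]
        abel
    exact ⟨⟨W', a', b', ha'inj, hb'surj, hab'⟩, RS⟩
  let rec0 : St 0 := ⟨Y, i, v, hi, hv, hex⟩
  let recf : ∀ n, St n := fun n => Nat.rec rec0 (fun n ih => (step n ih).1) n
  exact ⟨⟨fun n => (recf n).1, rfl, fun n => (step n (recf n)).2⟩⟩

end QGPAux
namespace QGPAux
variable {R : Type u} [Ring R]

lemma bwdChain_of_ses {X Y Z : ModuleCat.{u} R} (i : X ⟶ Y) (v : Y ⟶ Z)
    (hi : Function.Injective i) (hv : Function.Surjective v) (hex : Function.Exact i v)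
    (BX : BwdChain X) (BZ : BwdChain Z) {N0 : ModuleCat.{u} R} (st0 : ResStep N0 Z) :
    Nonempty (BwdChain Y) := by
  obtain ⟨KX, hX0, sX⟩ := BX
  obtain ⟨KZ, hZ0, sZ⟩ := BZ
  subst hX0
  subst hZ0
  let St : ℕ → Type (u+1) := fun n => Σ' (W : ModuleCat.{u} R) (a : KX n ⟶ W) (b : W ⟶ KZ n)
      (_prev : Σ' N : ModuleCat.{u} R, ResStep N (KZ n)),
      Function.Injective a ∧ Function.Surjective b ∧ Function.Exact a b
  have step : ∀ n, (st : St n) → Σ' (st' : St (n+1)), ResStep st.1 st'.1 := by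
    intro n st
    obtain ⟨W, a, b, ⟨N1, stP⟩, hainj, hbsurj, hab⟩ := st
    have ba0 : ∀ x, b (a x) = 0 := fun x => (hab (a x)).mpr ⟨x, rfl⟩
    have pXiX : ∀ x, (sX n).p ((sX n).i x) = 0 := fun x => ((sX n).ex _).mpr ⟨x, rfl⟩
    have pZiZ : ∀ x, (sZ n).p ((sZ n).i x) = 0 := fun x => ((sZ n).ex _).mpr ⟨x, rfl⟩
    have hexl := ext_lift a b hainj hbsurj hab stP
      (quasiProjective_of_projective (sX n).proj) (sX n).i
    let α : W ⟶ (sX n).P := hexl.choose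
    have hα := hexl.choose_spec
    have αa : ∀ x, α (a x) = (sX n).i x := fun x => hom_congr_fun hα x
    let PP : ModuleCat.{u} R := ModuleCat.of R ((sX n).P × (sZ n).P)
    let t : W ⟶ PP := ModuleCat.ofHom (LinearMap.prod (toLin α) (toLin (b ≫ (sZ n).i)))
    have tapp : ∀ w, t w = (α w, (sZ n).i (b w)) := fun _ => rfl
    have ht : Function.Injective t := by
      have key : ∀ w, t w = 0 → w = 0 := by
        intro w hw
        have h2 : (sZ n).i (b w) = 0 := congrArg Prod.snd hw
        have h3 : b w = 0 := by
          apply (sZ n).inj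
          rw [h2, map_zero]
        obtain ⟨x, rfl⟩ := (hab w).mp h3
        have h4 : α (a x) = 0 := congrArg Prod.fst hw
        rw [αa] at h4
        have h5 : x = 0 := by
          apply (sX n).inj
          rw [h4, map_zero]
        rw [h5, map_zero]
      intro w1 w2 h12
      have := key (w1 - w2) (by rw [map_sub, h12, sub_self])
      exact sub_eq_zero.mp this
    let W' : ModuleCat.{u} R := ModuleCat.of R (((sX n).P × (sZ n).P) ⧸ LinearMap.range t.hom)
    let mk : PP ⟶ W' := ModuleCat.ofHom (LinearMap.range t.hom).mkQ
    have mksurj : Function.Surjective mk := Submodule.mkQ_surjective _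
    have mkt : ∀ w : W, mk (t w) = 0 := by
      intro w
      exact (Submodule.Quotient.mk_eq_zero _).mpr ⟨w, rfl⟩
    let j1 : (sX n).P ⟶ W' := ModuleCat.ofHom ((toLin mk) ∘ₗ (LinearMap.inl R (sX n).P (sZ n).P))
    have hkill : ∀ p, (sX n).p p = 0 → j1 p = 0 := by
      intro p hp
      obtain ⟨x, rfl⟩ := ((sX n).ex p).mp hp
      have h1 : t (a x) = ((sX n).i x, 0) := by
        rw [tapp, αa, ba0, map_zero]
      show mk ((sX n).i x, (0 : (sZ n).P)) = 0
      rw [← h1, mkt]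
    have hfac := exists_factor (sX n).p (sX n).surj j1 hkill
    let a' : KX (n+1) ⟶ W' := hfac.choose
    have ha' := hfac.choose_spec
    have a'spec : ∀ p, a' ((sX n).p p) = mk (p, 0) := fun p => hom_congr_fun ha' p
    have hranker : LinearMap.range t.hom ≤ LinearMap.ker ((toLin (sZ n).p) ∘ₗ
        (LinearMap.snd R (sX n).P (sZ n).P)) := by
      rintro pq ⟨w, rfl⟩
      show (sZ n).p ((sZ n).i (b w)) = 0
      rw [pZiZ]
    let b' : W' ⟶ KZ (n+1) := ModuleCat.ofHom (Submodule.liftQ (LinearMap.range t.hom)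
      ((toLin (sZ n).p) ∘ₗ (LinearMap.snd R (sX n).P (sZ n).P)) hranker)
    have b'app : ∀ pq : ((sX n).P × (sZ n).P), b' (mk pq) = (sZ n).p pq.2 := fun _ => rfl
    have ha'inj : Function.Injective a' := by
      intro x1 x2 h12
      obtain ⟨p1, rfl⟩ := (sX n).surj x1
      obtain ⟨p2, rfl⟩ := (sX n).surj x2
      rw [a'spec, a'spec] at h12
      have hsub : ((p1 - p2 : (sX n).P), (0 : (sZ n).P)) ∈ LinearMap.range t.hom := by
        have h13 := (Submodule.Quotient.eq (LinearMap.range t.hom)).mp h12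
        have h14 : ((p1, 0) : ((sX n).P × (sZ n).P)) - (p2, 0) = (p1 - p2, 0) := by
          rw [Prod.mk_sub_mk, sub_zero]
        rw [h14] at h13
        exact h13
      obtain ⟨w, hw⟩ := hsub
      have h2 : (sZ n).i (b w) = 0 := congrArg Prod.snd hw
      have h3 : b w = 0 := by
        apply (sZ n).inj; rw [h2, map_zero]
      obtain ⟨x, rfl⟩ := (hab w).mp h3
      have h4 : α (a x) = p1 - p2 := congrArg Prod.fst hw
      rw [αa] at h4
      have h5 : (sX n).p (p1 - p2) = 0 := by
        rw [← h4, pXiX]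
      rw [map_sub, sub_eq_zero] at h5
      exact h5
    have hb'surj : Function.Surjective b' := by
      intro z
      obtain ⟨q, hq⟩ := (sZ n).surj z
      exact ⟨mk (0, q), by rw [b'app]; exact hq⟩
    have hab' : Function.Exact a' b' := by
      intro w'
      obtain ⟨⟨p, q⟩, rfl⟩ := mksurj w'
      constructor
      · intro h0
        rw [b'app] at h0
        obtain ⟨z, hz⟩ := ((sZ n).ex q).mp h0
        obtain ⟨w, rfl⟩ := hbsurj z
        refine ⟨(sX n).p (p - α w), ?_⟩
        rw [a'spec]
        apply (Submodule.Quotient.eq _).mpr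
        refine ⟨-w, ?_⟩
        rw [tapp]
        apply Prod.ext
        · show α (-w) = (p - α w) - p
          rw [map_neg]; abel
        · show (sZ n).i (b (-w)) = 0 - q
          rw [map_neg, map_neg, hz]; abel
      · rintro ⟨x, hx⟩
        rw [← hx]
        obtain ⟨pp, rfl⟩ := (sX n).surj x
        rw [a'spec, b'app]
        exact map_zero _
    haveI hPP : Module.Projective R ((sX n).P × (sZ n).P) := by
      haveI := (sX n).proj
      haveI := (sZ n).proj
      infer_instance
    have RS : ResStep W W' := by
      refine ⟨PP, t, mk, hPP, ht, mksurj, ?_, ?_⟩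
      · intro pq
        constructor
        · intro h0
          obtain ⟨w, hw⟩ := (Submodule.Quotient.mk_eq_zero _).mp h0
          exact ⟨w, hw⟩
        · rintro ⟨w, rfl⟩
          exact mkt w
      · intro Q hQ f
        obtain ⟨gA, hgA⟩ := (sX n).lift Q hQ (a ≫ f)
        have gAiX : ∀ x, gA ((sX n).i x) = f (a x) := fun x => hom_congr_fun hgA x
        let f2 : W ⟶ Q := ModuleCat.ofHom ((toLin f) - (toLin gA) ∘ₗ (toLin α))
        have f2app : ∀ w, f2 w = f w - gA (α w) := fun _ => rfl
        have hkill2 : ∀ w, b w = 0 → f2 w = 0 := by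
          intro w hw
          obtain ⟨x, rfl⟩ := (hab w).mp hw
          rw [f2app, αa, gAiX, sub_self]
        obtain ⟨h', hh'⟩ := exists_factor b hbsurj f2 hkill2
        have h'b : ∀ w, h' (b w) = f2 w := fun w => hom_congr_fun hh' w
        obtain ⟨gZ, hgZ⟩ := (sZ n).lift Q hQ h'
        have gZiZ : ∀ z, gZ ((sZ n).i z) = h' z := fun z => hom_congr_fun hgZ z
        refine ⟨ModuleCat.ofHom (LinearMap.coprod (toLin gA) (toLin gZ)), ?_⟩
        apply ModuleCat.hom_ext; apply LinearMap.ext; intro w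
        show gA (α w) + gZ ((sZ n).i (b w)) = f w
        rw [gZiZ, h'b, f2app]
        abel
    exact ⟨⟨W', a', b', ⟨KZ n, sZ n⟩, ha'inj, hb'surj, hab'⟩, RS⟩
  let rec0 : St 0 := ⟨Y, i, v, ⟨N0, st0⟩, hi, hv, hex⟩
  let recf : ∀ n, St n := fun n => Nat.rec rec0 (fun n ih => (step n ih).1) n
  exact ⟨⟨fun n => (recf n).1, rfl, fun n => (step n (recf n)).2⟩⟩

/-- extension closure: if the two ends of a short exact sequence are quasi-Gorenstein
projective then so is the middle -/
lemma qgp_ext {X Y Z : ModuleCat.{u} R} (i : X ⟶ Y) (v : Y ⟶ Z)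
    (hi : Function.Injective i) (hv : Function.Surjective v) (hex : Function.Exact i v)
    (hX : QuasiGorensteinProjective X) (hZ : QuasiGorensteinProjective Z) :
    QuasiGorensteinProjective Y := by
  obtain ⟨⟨FX⟩, ⟨BX⟩⟩ := chains_of_qgp hX
  obtain ⟨⟨FZ⟩, ⟨BZ⟩⟩ := chains_of_qgp hZ
  obtain ⟨N0, -, ⟨st0⟩⟩ := exists_step_qgp hZ
  obtain ⟨FY⟩ := fwdChain_of_ses i v hi hv hex FX FZ
  obtain ⟨BY⟩ := bwdChain_of_ses i v hi hv hex BX BZ st0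
  exact qgp_of_chains FY BY

end QGPAux
namespace QGPAux
variable {R : Type u} [Ring R]

/-- if `X` is a direct summand of a quasi-Gorenstein projective module with projective
complement, then `X` is quasi-Gorenstein projective -/
lemma qgp_of_split {X W P0 : ModuleCat.{u} R} (hW : QuasiGorensteinProjective W)
    (ι : X ⟶ W) (pr : W ⟶ P0) (hP0 : Module.Projective R P0)
    (hι : Function.Injective ι) (hpr : Function.Surjective pr)
    (hexι : Function.Exact ι pr) (σ : P0 ⟶ W) (hσ : ∀ c, pr (σ c) = c) :
    QuasiGorensteinProjective X := by
  have prι : ∀ x, pr (ι x) = 0 := fun x => (hexι (ι x)).mpr ⟨x, rfl⟩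
  -- the retraction e : W ⟶ X
  have memE : ∀ w : W, w - σ (pr w) ∈ LinearMap.range ι.hom := by
    intro w
    have h1 : pr (w - σ (pr w)) = 0 := by rw [map_sub, hσ, sub_self]
    obtain ⟨x, hx⟩ := (hexι _).mp h1
    exact ⟨x, hx⟩
  let e : W ⟶ X := ModuleCat.ofHom ((preim ι hι) ∘ₗ (LinearMap.codRestrict (LinearMap.range ι.hom)
    ((LinearMap.id : W →ₗ[R] W) - (toLin σ) ∘ₗ (toLin pr)) memE))
  have he3 : ∀ w, ι (e w) = w - σ (pr w) := by
    intro w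
    show ι (preim ι hι ⟨w - σ (pr w), memE w⟩) = w - σ (pr w)
    rw [preim_spec]
  have he1 : ∀ x, e (ι x) = x := by
    intro x
    apply hι
    rw [he3, prι, map_zero, sub_zero]
  have he2 : ∀ c, e (σ c) = 0 := by
    intro c
    apply hι
    rw [he3, hσ, sub_self, map_zero]
  -- Part 1: forward chain for X
  obtain ⟨⟨FW⟩, -⟩ := chains_of_qgp hW
  have hFX : Nonempty (FwdChain X) := by
    obtain ⟨KW, hW0, sW⟩ := FW
    subst hW0
    let St : ℕ → Type (u+1) := fun n => Σ' (N Pc : ModuleCat.{u} R)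
      (uu : KW (n+1) ⟶ N) (q : N ⟶ Pc),
      Module.Projective R Pc ∧ Function.Injective uu ∧ Function.Surjective q ∧
        Function.Exact uu q
    have stepS : ∀ n, (st : St n) → Σ' (st' : St (n+1)), ResStep st'.1 st.1 := by
      intro n st
      obtain ⟨N, Pc, uu, q, hPc, huinj, hqsurj, huq⟩ := st
      haveI := hPc
      have quu0 : ∀ x, q (uu x) = 0 := fun x => (huq (uu x)).mpr ⟨x, rfl⟩
      have pWiW : ∀ x, (sW (n+1)).p ((sW (n+1)).i x) = 0 :=
        fun x => ((sW (n+1)).ex _).mpr ⟨x, rfl⟩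
      let σc : Pc →ₗ[R] N :=
        (Module.projective_lifting_property (toLin q) LinearMap.id hqsurj).choose
      have hσc := (Module.projective_lifting_property (toLin q) LinearMap.id hqsurj).choose_spec
      have qσ : ∀ c, q (σc c) = c := fun c => LinearMap.congr_fun hσc c
      let PP : ModuleCat.{u} R := ModuleCat.of R ((sW (n+1)).P × Pc)
      let Φ : PP ⟶ N := ModuleCat.ofHom (LinearMap.coprod (toLin ((sW (n+1)).p ≫ uu)) σc)
      have Φapp : ∀ (p : (sW (n+1)).P) (c : Pc), Φ (p, c) = uu ((sW (n+1)).p p) + σc c :=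
        fun _ _ => rfl
      have hΦsurj : Function.Surjective Φ := by
        intro n0
        have h1 : q (n0 - σc (q n0)) = 0 := by rw [map_sub, qσ, sub_self]
        obtain ⟨x, hx⟩ := (huq _).mp h1
        obtain ⟨p, hp⟩ := (sW (n+1)).surj x
        refine ⟨(p, q n0), ?_⟩
        rw [Φapp, hp, hx]
        abel
      let N' : ModuleCat.{u} R := ModuleCat.of R ↥(LinearMap.ker Φ.hom)
      have memKer : ∀ x : KW (n+2), ((sW (n+1)).i x, (0 : Pc)) ∈ LinearMap.ker Φ.hom := by
        intro x
        have h1 : Φ ((sW (n+1)).i x, 0) = 0 := by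
          rw [Φapp, pWiW, map_zero, map_zero, add_zero]
        exact h1
      let u' : KW (n+2) ⟶ N' := ModuleCat.ofHom (LinearMap.codRestrict (LinearMap.ker Φ.hom)
        (LinearMap.prod (toLin (sW (n+1)).i) 0) memKer)
      have u'app : ∀ x, (u' x).1 = ((sW (n+1)).i x, (0 : Pc)) := fun _ => rfl
      have hu'inj : Function.Injective u' := by
        intro x y hxy
        have h1 : ((u' x).1).1 = ((u' y).1).1 := by rw [hxy]
        exact (sW (n+1)).inj h1
      have hu'surj : Function.Surjective u' := by
        rintro ⟨⟨p, c⟩, hw⟩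
        have hw' : uu ((sW (n+1)).p p) + σc c = 0 := hw
        have h1 : q (uu ((sW (n+1)).p p) + σc c) = 0 := by rw [hw', map_zero]
        rw [map_add, quu0, zero_add, qσ] at h1
        subst h1
        rw [map_zero, add_zero] at hw'
        have h2 : (sW (n+1)).p p = 0 := by
          apply huinj; rw [hw', map_zero]
        obtain ⟨x, hx⟩ := ((sW (n+1)).ex p).mp h2
        refine ⟨x, ?_⟩
        apply Subtype.ext
        rw [u'app]
        apply Prod.ext
        · exact hx
        · rfl
      haveI := (sW (n+1)).proj
      haveI hPP : Module.Projective R ((sW (n+1)).P × Pc) := inferInstance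
      have RS : ResStep N' N := by
        refine ⟨PP, ModuleCat.ofHom (LinearMap.ker Φ.hom).subtype, Φ, hPP, Subtype.val_injective, hΦsurj, ?_, ?_⟩
        · intro pq
          constructor
          · intro hp; exact ⟨⟨pq, hp⟩, rfl⟩
          · rintro ⟨w, rfl⟩; exact w.2
        · intro Q hQ f
          obtain ⟨g1, hg1⟩ := (sW (n+1)).lift Q hQ (u' ≫ f)
          have g1iW : ∀ x, g1 ((sW (n+1)).i x) = f (u' x) := fun x => hom_congr_fun hg1 x
          refine ⟨ModuleCat.ofHom ((toLin g1) ∘ₗ (LinearMap.fst R (sW (n+1)).P Pc)), ?_⟩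
          apply ModuleCat.hom_ext; apply LinearMap.ext; intro w
          show g1 ((w.1).1) = f w
          obtain ⟨x, hx⟩ := hu'surj w
          have h1 : ((sW (n+1)).i x, (0 : Pc)) = w.1 := by rw [← u'app, hx]
          have h2 : (sW (n+1)).i x = (w.1).1 := congrArg Prod.fst h1
          rw [← h2, g1iW, hx]
      exact ⟨⟨N', Z0, u', 0, punit_projective, hu'inj,
        fun c => ⟨0, Subsingleton.elim _ _⟩,
        fun y => ⟨fun _ => hu'surj y, fun _ => Subsingleton.elim _ _⟩⟩, RS⟩
    -- the first state and first ResStep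
    let π₀ : (sW 0).P ⟶ X := (sW 0).p ≫ e
    have pWiW0 : ∀ x, (sW 0).p ((sW 0).i x) = 0 := fun x => ((sW 0).ex _).mpr ⟨x, rfl⟩
    have hπ₀surj : Function.Surjective π₀ := by
      intro x
      obtain ⟨p, hp⟩ := (sW 0).surj (ι x)
      exact ⟨p, by show e ((sW 0).p p) = x; rw [hp, he1]⟩
    let N : ModuleCat.{u} R := ModuleCat.of R ↥(LinearMap.ker π₀.hom)
    have memU : ∀ x : KW 1, (sW 0).i x ∈ LinearMap.ker π₀.hom := by
      intro x
      show e ((sW 0).p ((sW 0).i x)) = 0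
      rw [pWiW0, map_zero]
    let uu : KW 1 ⟶ N := ModuleCat.ofHom (LinearMap.codRestrict (LinearMap.ker π₀.hom) (toLin (sW 0).i) memU)
    let q : N ⟶ P0 := ModuleCat.ofHom ((toLin pr) ∘ₗ (toLin (sW 0).p) ∘ₗ (LinearMap.ker π₀.hom).subtype)
    have qapp : ∀ w : ↥(LinearMap.ker π₀.hom), q w = pr ((sW 0).p w.1) := fun _ => rfl
    have huuinj : Function.Injective uu := by
      intro x y hxy
      have h1 : (uu x).1 = (uu y).1 := by rw [hxy]
      exact (sW 0).inj h1
    have hqsurj : Function.Surjective q := by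
      intro c
      obtain ⟨p, hp⟩ := (sW 0).surj (σ c)
      have hker : p ∈ LinearMap.ker π₀.hom := by
        show e ((sW 0).p p) = 0
        rw [hp, he2]
      refine ⟨⟨p, hker⟩, ?_⟩
      rw [qapp]
      show pr ((sW 0).p p) = c
      rw [hp, hσ]
    have huq : Function.Exact uu q := by
      intro w
      constructor
      · intro h0
        rw [qapp] at h0
        obtain ⟨x, hx⟩ := (hexι _).mp h0
        have h1 : e ((sW 0).p w.1) = 0 := w.2
        rw [← hx, he1] at h1
        rw [h1, map_zero] at hx
        obtain ⟨x', hx'⟩ := ((sW 0).ex _).mp hx.symm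
        exact ⟨x', Subtype.ext hx'⟩
      · rintro ⟨x, rfl⟩
        rw [qapp]
        show pr ((sW 0).p ((sW 0).i x)) = 0
        rw [pWiW0, map_zero]
    have RS0 : ResStep N X := by
      refine ⟨(sW 0).P, ModuleCat.ofHom (LinearMap.ker π₀.hom).subtype, π₀, (sW 0).proj,
        Subtype.val_injective, hπ₀surj, ?_, ?_⟩
      · intro p
        constructor
        · intro hp; exact ⟨⟨p, hp⟩, rfl⟩
        · rintro ⟨w, rfl⟩; exact w.2
      · intro Q hQ f
        obtain ⟨g1, hg1⟩ := (sW 0).lift Q hQ (uu ≫ f)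
        have g1iW : ∀ x, g1 ((sW 0).i x) = f (uu x) := fun x => hom_congr_fun hg1 x
        let fL : ↥(LinearMap.ker π₀.hom) →ₗ[R] Q := toLin f
        let f2 : N ⟶ Q := ModuleCat.ofHom (fL - (toLin g1) ∘ₗ (LinearMap.ker π₀.hom).subtype)
        have f2app : ∀ w : ↥(LinearMap.ker π₀.hom), f2 w = f w - g1 w.1 := fun _ => rfl
        have hkill : ∀ w, q w = 0 → f2 w = 0 := by
          intro w hw
          obtain ⟨x, rfl⟩ := (huq w).mp hw
          rw [f2app]
          show f (uu x) - g1 ((sW 0).i x) = 0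
          rw [g1iW, sub_self]
        obtain ⟨h', hh'⟩ := exists_factor q hqsurj f2 hkill
        have h'q : ∀ w, h' (q w) = f2 w := fun w => hom_congr_fun hh' w
        refine ⟨ModuleCat.ofHom ((toLin g1) + (toLin h') ∘ₗ (toLin pr) ∘ₗ (toLin (sW 0).p)), ?_⟩
        apply ModuleCat.hom_ext; apply LinearMap.ext; intro w
        show g1 w.1 + h' (pr ((sW 0).p w.1)) = f w
        have h1 : pr ((sW 0).p w.1) = q w := rfl
        rw [h1, h'q, f2app]
        abel
    let st0 : St 0 := ⟨N, P0, uu, q, hP0, huuinj, hqsurj, huq⟩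
    let recS : ∀ n, St n := fun n => Nat.rec st0 (fun n ih => (stepS n ih).1) n
    refine ⟨⟨fun n => match n with | 0 => X | (n+1) => (recS n).1, rfl, fun n => ?_⟩⟩
    match n with
    | 0 => exact RS0
    | (n+1) => exact (stepS n (recS n)).2
  -- Part 2: backward chain for X
  obtain ⟨K, P, ιD, πD, h1D, h2D, h3D, h4D, h5D, ⟨eIso⟩⟩ := hW
  have stepD : ∀ n : ℤ, ResStep (K (n+1)) (K n) :=
    fun n => ⟨P n, ιD n, πD n, h1D n, h2D n, h3D n, h4D n, h5D n⟩
  have sm1 := (stepD (-1)).castL (congrArg K (show (-1 : ℤ)+1 = 0 by omega))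
  have s' := sm1.isoL eIso.symm
  -- s' : ResStep W (K (-1))
  have s'ii0 : ∀ w : W, s'.p (s'.i w) = 0 := fun w => (s'.ex (s'.i w)).mpr ⟨w, rfl⟩
  let τ : X ⟶ s'.P := ι ≫ s'.i
  let Xm1 : ModuleCat.{u} R := ModuleCat.of R (s'.P ⧸ LinearMap.range τ.hom)
  let mk : s'.P ⟶ Xm1 := ModuleCat.ofHom (LinearMap.range τ.hom).mkQ
  have mkτ : ∀ x : X, mk (τ x) = 0 := fun x => (Submodule.Quotient.mk_eq_zero _).mpr ⟨x, rfl⟩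
  have RSX : ResStep X Xm1 := by
    refine ⟨s'.P, τ, mk, s'.proj, fun x y hxy => hι (s'.inj hxy), Submodule.mkQ_surjective _,
      ?_, ?_⟩
    · intro p
      constructor
      · intro h0
        obtain ⟨x, hx⟩ := (Submodule.Quotient.mk_eq_zero _).mp h0
        exact ⟨x, hx⟩
      · rintro ⟨x, rfl⟩
        exact mkτ x
    · intro Q hQ f
      obtain ⟨g, hg⟩ := s'.lift Q hQ (e ≫ f)
      have hgw : ∀ w : W, g (s'.i w) = f (e w) := fun w => hom_congr_fun hg w
      refine ⟨g, ?_⟩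
      apply ModuleCat.hom_ext; apply LinearMap.ext; intro x
      show g (s'.i (ι x)) = f x
      rw [hgw, he1]
  -- X₋₁ sits in a SES  0 → P0 → X₋₁ → K (-1) → 0
  let f₁ : P0 ⟶ Xm1 := σ ≫ s'.i ≫ mk
  have hrk : LinearMap.range τ.hom ≤ LinearMap.ker (toLin s'.p) := by
    rintro p ⟨x, rfl⟩
    show s'.p (s'.i (ι x)) = 0
    rw [s'ii0]
  let g₁ : Xm1 ⟶ K (-1) := ModuleCat.ofHom (Submodule.liftQ (LinearMap.range τ.hom) (toLin s'.p) hrk)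
  have g₁app : ∀ p : s'.P, g₁ (mk p) = s'.p p := fun _ => rfl
  have hf₁inj : Function.Injective f₁ := by
    have key : ∀ c, f₁ c = 0 → c = 0 := by
      intro c hc
      have h1 : s'.i (σ c) ∈ LinearMap.range τ.hom := by
        have := (Submodule.Quotient.mk_eq_zero _).mp hc
        exact this
      obtain ⟨x, hx⟩ := h1
      have h2 : σ c = ι x := s'.inj hx.symm
      have h3 : c = pr (ι x) := by rw [← h2, hσ]
      rw [prι] at h3
      exact h3
    intro c1 c2 h12
    have := key (c1 - c2) (by rw [map_sub, h12, sub_self])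
    exact sub_eq_zero.mp this
  have hg₁surj : Function.Surjective g₁ := by
    intro z
    obtain ⟨p, hp⟩ := s'.surj z
    exact ⟨mk p, by rw [g₁app]; exact hp⟩
  have hfg₁ : Function.Exact f₁ g₁ := by
    intro w'
    obtain ⟨p, rfl⟩ := Submodule.mkQ_surjective (LinearMap.range τ.hom) w'
    constructor
    · intro h0
      have h0' : s'.p p = 0 := h0
      obtain ⟨w, hw⟩ := (s'.ex p).mp h0'
      refine ⟨pr w, ?_⟩
      show mk (s'.i (σ (pr w))) = mk p
      apply (Submodule.Quotient.eq _).mpr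
      refine ⟨-(e w), ?_⟩
      show s'.i (ι (-(e w))) = s'.i (σ (pr w)) - p
      have hcalc : ι (-(e w)) = σ (pr w) - w := by rw [map_neg, he3, neg_sub]
      rw [hcalc, map_sub, ← hw]
    · rintro ⟨c, hc⟩
      rw [← hc]
      show g₁ (mk (s'.i (σ c))) = 0
      rw [g₁app, s'ii0]
  have hXm1 : QuasiGorensteinProjective Xm1 :=
    qgp_ext f₁ g₁ hf₁inj hg₁surj hfg₁ (qgp_of_projective hP0) (qgp_of_unpacked K stepD (-1))
  obtain ⟨-, ⟨⟨KB', hB'0, sB'⟩⟩⟩ := chains_of_qgp hXm1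
  have hBX : Nonempty (BwdChain X) := by
    refine ⟨⟨fun n => match n with | 0 => X | (n+1) => KB' n, rfl, fun n => ?_⟩⟩
    match n with
    | 0 => exact RSX.castR hB'0.symm
    | (n+1) => exact sB' n
  obtain ⟨FX⟩ := hFX
  obtain ⟨BX⟩ := hBX
  exact qgp_of_chains FX BX

end QGPAux
namespace QGPAux
variable {R : Type u} [Ring R]

/-- resolving property: kernel of an epi from QGP onto QGP is QGP -/
lemma qgp_ker {X Y Z : ModuleCat.{u} R} (i : X ⟶ Y) (v : Y ⟶ Z)
    (hi : Function.Injective i) (hv : Function.Surjective v) (hex : Function.Exact i v)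
    (hY : QuasiGorensteinProjective Y) (hZ : QuasiGorensteinProjective Z) :
    QuasiGorensteinProjective X := by
  obtain ⟨Z₁, hZ₁, ⟨stZ⟩⟩ := exists_step_qgp hZ
  have pZiZ : ∀ z, stZ.p (stZ.i z) = 0 := fun z => (stZ.ex _).mpr ⟨z, rfl⟩
  let D : ModuleCat.of R (Y × stZ.P) ⟶ Z :=
    ModuleCat.ofHom ((toLin v) ∘ₗ (LinearMap.fst R Y stZ.P) - (toLin stZ.p) ∘ₗ (LinearMap.snd R Y stZ.P))
  have Dapp : ∀ (y : Y) (p : stZ.P), D (y, p) = v y - stZ.p p := fun _ _ => rfl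
  let Wm : ModuleCat.{u} R := ModuleCat.of R ↥(LinearMap.ker D.hom)
  have memZ : ∀ z : Z₁, ((0 : Y), stZ.i z) ∈ LinearMap.ker D.hom := by
    intro z
    have h1 : D (0, stZ.i z) = 0 := by rw [Dapp, map_zero, pZiZ, sub_self]
    exact h1
  let jZ : Z₁ ⟶ Wm := ModuleCat.ofHom (LinearMap.codRestrict (LinearMap.ker D.hom)
    (LinearMap.prod 0 (toLin stZ.i)) memZ)
  have jZapp : ∀ z, (jZ z).1 = ((0 : Y), stZ.i z) := fun _ => rfl
  let wY : Wm ⟶ Y := ModuleCat.ofHom ((LinearMap.fst R Y stZ.P) ∘ₗ (LinearMap.ker D.hom).subtype)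
  let wP : Wm ⟶ stZ.P := ModuleCat.ofHom ((LinearMap.snd R Y stZ.P) ∘ₗ (LinearMap.ker D.hom).subtype)
  have hjZinj : Function.Injective jZ := by
    intro z1 z2 h12
    apply stZ.inj
    exact congrArg Prod.snd (congrArg Subtype.val h12)
  have hwYsurj : Function.Surjective wY := by
    intro y
    obtain ⟨p, hp⟩ := stZ.surj (v y)
    have hmem : (y, p) ∈ LinearMap.ker D.hom := by
      have h1 : D (y, p) = 0 := by rw [Dapp, hp, sub_self]
      exact h1
    exact ⟨⟨(y, p), hmem⟩, rfl⟩
  have hexZ : Function.Exact jZ wY := by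
    intro w
    constructor
    · intro h0
      have hD : v w.1.1 - stZ.p w.1.2 = 0 := w.2
      have h1 : w.1.1 = 0 := h0
      rw [h1, map_zero, zero_sub, neg_eq_zero] at hD
      obtain ⟨z, hz⟩ := (stZ.ex _).mp hD
      refine ⟨z, ?_⟩
      apply Subtype.ext
      rw [jZapp]
      apply Prod.ext
      · exact h1.symm
      · exact hz
    · rintro ⟨z, rfl⟩
      rfl
  have hWm : QuasiGorensteinProjective Wm := qgp_ext jZ wY hjZinj hwYsurj hexZ hZ₁ hY
  have memX : ∀ x : X, (i x, (0 : stZ.P)) ∈ LinearMap.ker D.hom := by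
    intro x
    have h1 : D (i x, 0) = 0 := by
      rw [Dapp, map_zero, sub_zero]
      exact (hex (i x)).mpr ⟨x, rfl⟩
    exact h1
  let jX : X ⟶ Wm := ModuleCat.ofHom (LinearMap.codRestrict (LinearMap.ker D.hom)
    (LinearMap.prod (toLin i) 0) memX)
  have jXapp : ∀ x, (jX x).1 = (i x, (0 : stZ.P)) := fun _ => rfl
  have hjXinj : Function.Injective jX := by
    intro x1 x2 h12
    apply hi
    exact congrArg Prod.fst (congrArg Subtype.val h12)
  have hwPsurj : Function.Surjective wP := by
    intro p
    obtain ⟨y, hy⟩ := hv (stZ.p p)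
    have hmem : (y, p) ∈ LinearMap.ker D.hom := by
      have h1 : D (y, p) = 0 := by rw [Dapp, hy, sub_self]
      exact h1
    exact ⟨⟨(y, p), hmem⟩, rfl⟩
  have hexX : Function.Exact jX wP := by
    intro w
    constructor
    · intro h0
      have hD : v w.1.1 - stZ.p w.1.2 = 0 := w.2
      have h1 : w.1.2 = 0 := h0
      rw [h1, map_zero, sub_zero] at hD
      obtain ⟨x, hx⟩ := (hex _).mp hD
      refine ⟨x, ?_⟩
      apply Subtype.ext
      rw [jXapp]
      apply Prod.ext
      · exact hx
      · exact h1.symm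
    · rintro ⟨x, rfl⟩
      rfl
  haveI := stZ.proj
  obtain ⟨σ, hσ0⟩ := Module.projective_lifting_property (toLin wP) LinearMap.id hwPsurj
  have hσ : ∀ c, wP (σ c) = c := fun c => LinearMap.congr_fun hσ0 c
  exact qgp_of_split hWm jX wP stZ.proj hjXinj hwPsurj hexX (ModuleCat.ofHom σ) hσ

/-- dimension inequality through subobjects: for `0 → X → Y → Z → 0` with `Z` QGP,
`qgpdimLE m Y → qgpdimLE m X`. -/
lemma qgpdimLE_sub (m : ℕ) {X Y Z : ModuleCat.{u} R} (i : X ⟶ Y) (v : Y ⟶ Z)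
    (hi : Function.Injective i) (hv : Function.Surjective v) (hex : Function.Exact i v)
    (hZ : QuasiGorensteinProjective Z) (hY : qgpdimLE m Y) : qgpdimLE m X := by
  match m with
  | 0 => exact qgp_ker i v hi hv hex hY hZ
  | (m+1) =>
    obtain ⟨Km, G, f, g, hG, hfinj, hgsurj, hfg, hK⟩ := hY
    have gf0 : ∀ k, g (f k) = 0 := fun k => (hfg (f k)).mpr ⟨k, rfl⟩
    let w : G ⟶ Z := g ≫ v
    let G' : ModuleCat.{u} R := ModuleCat.of R ↥(LinearMap.ker w.hom)
    have hwsurj : Function.Surjective w := by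
      intro z
      obtain ⟨y, hy⟩ := hv z
      obtain ⟨a, ha⟩ := hgsurj y
      exact ⟨a, by show v (g a) = z; rw [ha, hy]⟩
    have hexw : Function.Exact ((LinearMap.ker w.hom).subtype) w := by
      intro a
      constructor
      · intro h0; exact ⟨⟨a, h0⟩, rfl⟩
      · rintro ⟨b, rfl⟩; exact b.2
    have hG' : QuasiGorensteinProjective G' :=
      qgp_ker (ModuleCat.ofHom (LinearMap.ker w.hom).subtype) w Subtype.val_injective hwsurj hexw hG hZ
    have memU : ∀ k : Km, f k ∈ LinearMap.ker w.hom := by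
      intro k
      show v (g (f k)) = 0
      rw [gf0, map_zero]
    let u : Km ⟶ G' := ModuleCat.ofHom (LinearMap.codRestrict (LinearMap.ker w.hom) (toLin f) memU)
    have memQ : ∀ a : ↥(LinearMap.ker w.hom), g a.1 ∈ LinearMap.range i.hom := by
      intro a
      obtain ⟨x, hx⟩ := (hex (g a.1)).mp a.2
      exact ⟨x, hx⟩
    let q : G' ⟶ X := ModuleCat.ofHom ((preim i hi) ∘ₗ (LinearMap.codRestrict (LinearMap.range i.hom)
      ((toLin g) ∘ₗ (LinearMap.ker w.hom).subtype) memQ))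
    have qspec : ∀ a : ↥(LinearMap.ker w.hom), i (q a) = g a.1 := by
      intro a
      show i (preim i hi ⟨g a.1, memQ a⟩) = g a.1
      rw [preim_spec]
    have huinj : Function.Injective u := by
      intro k1 k2 h12
      apply hfinj
      exact congrArg Subtype.val h12
    have hqsurj : Function.Surjective q := by
      intro x
      obtain ⟨a, ha⟩ := hgsurj (i x)
      have hmem : a ∈ LinearMap.ker w.hom := by
        show v (g a) = 0
        rw [ha]
        exact (hex (i x)).mpr ⟨x, rfl⟩
      refine ⟨⟨a, hmem⟩, ?_⟩
      apply hi
      rw [qspec]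
      exact ha
    have hexuq : Function.Exact u q := by
      intro a
      constructor
      · intro h0
        have h1 : g a.1 = 0 := by
          rw [← qspec, h0, map_zero]
        obtain ⟨k, hk⟩ := (hfg _).mp h1
        exact ⟨k, Subtype.ext hk⟩
      · rintro ⟨k, rfl⟩
        apply hi
        rw [qspec, map_zero]
        show g (f k) = 0
        exact gf0 k
    exact ⟨Km, G', u, q, hG', huinj, hqsurj, hexuq, hK⟩

/-- dimension inequality through extensions: for `0 → X → Y → Z → 0` with `Z` QGP,
`qgpdimLE m X → qgpdimLE m Y`. -/
lemma qgpdimLE_mid : ∀ (m : ℕ) {X Y Z : ModuleCat.{u} R} (i : X ⟶ Y) (v : Y ⟶ Z),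
    Function.Injective i → Function.Surjective v → Function.Exact i v →
    QuasiGorensteinProjective Z → qgpdimLE m X → qgpdimLE m Y := by
  intro m
  induction m with
  | zero => exact fun i v hi hv hex hZ hX => qgp_ext i v hi hv hex hX hZ
  | succ m IH =>
    intro X Y Z i v hi hv hex hZ hX
    obtain ⟨Km, G, f, g, hG, hfinj, hgsurj, hfg, hKm⟩ := hX
    have gf0 : ∀ k, g (f k) = 0 := fun k => (hfg (f k)).mpr ⟨k, rfl⟩
    obtain ⟨Z₁, hZ₁, ⟨stZ⟩⟩ := exists_step_qgp hZ
    have pZiZ : ∀ z, stZ.p (stZ.i z) = 0 := fun z => (stZ.ex _).mpr ⟨z, rfl⟩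
    haveI := stZ.proj
    obtain ⟨h, hh⟩ := Module.projective_lifting_property (toLin v) (toLin stZ.p) hv
    have vh : ∀ p, v (h p) = stZ.p p := fun p => LinearMap.congr_fun hh p
    let GP : ModuleCat.{u} R := ModuleCat.of R (G × stZ.P)
    let eM : GP ⟶ Y := ModuleCat.ofHom (LinearMap.coprod (toLin (g ≫ i)) h)
    have eapp : ∀ (a : G) (p : stZ.P), eM (a, p) = i (g a) + h p := fun _ _ => rfl
    have hesurj : Function.Surjective eM := by
      intro y
      obtain ⟨p, hp⟩ := stZ.surj (v y)
      have h1 : v (y - h p) = 0 := by rw [map_sub, vh, hp, sub_self]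
      obtain ⟨x, hx⟩ := (hex _).mp h1
      obtain ⟨a, ha⟩ := hgsurj x
      refine ⟨(a, p), ?_⟩
      rw [eapp, ha, hx]
      abel
    let N : ModuleCat.{u} R := ModuleCat.of R ↥(LinearMap.ker eM.hom)
    have memK : ∀ k : Km, (f k, (0 : stZ.P)) ∈ LinearMap.ker eM.hom := by
      intro k
      have h1 : eM (f k, 0) = 0 := by
        rw [eapp, gf0, map_zero, map_zero, add_zero]
      exact h1
    let uK : Km ⟶ N := ModuleCat.ofHom (LinearMap.codRestrict (LinearMap.ker eM.hom)
      (LinearMap.prod (toLin f) 0) memK)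
    have uKapp : ∀ k, (uK k).1 = (f k, (0 : stZ.P)) := fun _ => rfl
    have memN : ∀ nn : ↥(LinearMap.ker eM.hom), nn.1.2 ∈ LinearMap.range stZ.i.hom := by
      intro nn
      have h1 : i (g nn.1.1) + h nn.1.2 = 0 := nn.2
      have h2 : v (i (g nn.1.1) + h nn.1.2) = 0 := by rw [h1, map_zero]
      have h3 : v (i (g nn.1.1)) = 0 := (hex _).mpr ⟨g nn.1.1, rfl⟩
      rw [map_add, h3, zero_add, vh] at h2
      obtain ⟨z, hz⟩ := (stZ.ex _).mp h2
      exact ⟨z, hz⟩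
    let bN : N ⟶ Z₁ := ModuleCat.ofHom ((preim stZ.i stZ.inj) ∘ₗ (LinearMap.codRestrict
      (LinearMap.range stZ.i.hom) ((LinearMap.snd R G stZ.P) ∘ₗ (LinearMap.ker eM.hom).subtype) memN))
    have bNspec : ∀ nn : ↥(LinearMap.ker eM.hom), stZ.i (bN nn) = nn.1.2 := by
      intro nn
      show stZ.i (preim stZ.i stZ.inj ⟨nn.1.2, memN nn⟩) = nn.1.2
      rw [preim_spec]
    have huKinj : Function.Injective uK := by
      intro k1 k2 h12
      apply hfinj
      exact congrArg Prod.fst (congrArg Subtype.val h12)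
    have hbNsurj : Function.Surjective bN := by
      intro z
      have h1 : v (h (stZ.i z)) = 0 := by rw [vh, pZiZ]
      obtain ⟨x, hx⟩ := (hex _).mp h1
      obtain ⟨a, ha⟩ := hgsurj x
      have hmem : ((-a : G), stZ.i z) ∈ LinearMap.ker eM.hom := by
        have h2 : eM (-a, stZ.i z) = 0 := by
          rw [eapp, map_neg, map_neg, ha, hx]
          abel
        exact h2
      refine ⟨⟨(-a, stZ.i z), hmem⟩, ?_⟩
      apply stZ.inj
      rw [bNspec]
    have hexuKbN : Function.Exact uK bN := by
      intro nn
      constructor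
      · intro h0
        have h1 : nn.1.2 = 0 := by rw [← bNspec, h0, map_zero]
        have h2 : i (g nn.1.1) + h nn.1.2 = 0 := nn.2
        rw [h1, map_zero, add_zero] at h2
        have h3 : g nn.1.1 = 0 := by
          apply hi
          rw [h2, map_zero]
        obtain ⟨k, hk⟩ := (hfg _).mp h3
        refine ⟨k, ?_⟩
        apply Subtype.ext
        rw [uKapp]
        apply Prod.ext
        · exact hk
        · exact h1.symm
      · rintro ⟨k, rfl⟩
        apply stZ.inj
        rw [bNspec, map_zero, uKapp]
    have hN : qgpdimLE m N := IH uK bN huKinj hbNsurj hexuKbN hZ₁ hKm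
    -- G × P is QGP
    have hPqgp : QuasiGorensteinProjective (ModuleCat.of R stZ.P) := by
      have : QuasiGorensteinProjective stZ.P := qgp_of_projective stZ.proj
      exact this
    have hGP : QuasiGorensteinProjective GP := by
      refine qgp_ext (ModuleCat.ofHom (LinearMap.inl R G stZ.P) : G ⟶ GP)
        (ModuleCat.ofHom (LinearMap.snd R G stZ.P) : GP ⟶ ModuleCat.of R stZ.P) ?_ ?_ ?_ hG hPqgp
      · intro a b hab
        exact congrArg Prod.fst hab
      · intro p
        exact ⟨(0, p), rfl⟩
      · rintro ⟨a, p⟩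
        constructor
        · intro h0
          have h1 : (p : stZ.P) = 0 := h0
          exact ⟨a, by rw [h1]; rfl⟩
        · rintro ⟨x, hx⟩
          have h1 : ((x, 0) : G × stZ.P) = (a, p) := hx
          have h2 : (0 : stZ.P) = p := congrArg Prod.snd h1
          exact h2.symm
    exact ⟨N, GP, ModuleCat.ofHom (LinearMap.ker eM.hom).subtype, eM, hGP, Subtype.val_injective, hesurj,
      (fun y => ⟨fun h0 => ⟨⟨y, h0⟩, rfl⟩, by rintro ⟨nn, rfl⟩; exact nn.2⟩), hN⟩

end QGPAux
/-- For a short exact sequence `0 → A → B → C → 0` with `A ≠ 0`, `A` and `B` of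
finite quasi-Gorenstein projective dimension and `C` quasi-Gorenstein projective,
the quasi-Gorenstein projective dimensions of `A` and `B` coincide. -/
theorem qgpdim_eq_of_ses {A B C : ModuleCat.{u} R}
    (f : A ⟶ B) (g : B ⟶ C)
    (hf : Function.Injective f) (hg : Function.Surjective g)
    (hfg : Function.Exact f g)
    (hA0 : Nontrivial A)
    (hA : ∃ m : ℕ, qgpdimLE m A) (hB : ∃ m : ℕ, qgpdimLE m B)
    (hC : QuasiGorensteinProjective C) :
    qgpdim A = qgpdim B := by
  have key : ∀ m : ℕ, qgpdimLE m A ↔ qgpdimLE m B := fun m =>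
    ⟨fun h => QGPAux.qgpdimLE_mid m f g hf hg hfg hC h,
     fun h => QGPAux.qgpdimLE_sub m f g hf hg hfg hC h⟩
  have hset : {m : ℕ | qgpdimLE m A} = {m : ℕ | qgpdimLE m B} := Set.ext key
  rw [qgpdim, qgpdim, hset]
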